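/- Let H₁ and H₂ be labelled balanced bipartite graphs with parts of sizes n₁ and n₂ that are regular of degrees d₁ and d₂ respectively (d₁, d₂ positive), and suppose each of the two labellings is either a matching ordering or a comatching ordering. Then H₁ ⋈ H₂ is a balanced bipartite graph with parts A₁ × A₂ and B₁ × B₂, each of size n₁·n₂, and H₁ ⋈ H₂ is regular of degree d₁ + d₂ − 1 if both labellings are matching orderings, and regular of degree d₁ + d₂ otherwise. -/

import Mathlib

/-- A graph on a sum type is (balanced) bipartite with the two summands as parts:
every edge joins a left vertex to a right vertex. -/
def IsBipSum {α β : Type*} (H : SimpleGraph (α ⊕ β)) : Prop :=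
  (∀ i j, ¬ H.Adj (Sum.inl i) (Sum.inl j)) ∧ (∀ i j, ¬ H.Adj (Sum.inr i) (Sum.inr j))

/-- The labelling of a labelled balanced bipartite graph is a matching ordering:
`a_i b_i` is an edge for every `i`. -/
def MatchingOrd {n : ℕ} (H : SimpleGraph (Fin n ⊕ Fin n)) : Prop :=
  ∀ i : Fin n, H.Adj (Sum.inl i) (Sum.inr i)

/-- The labelling of a labelled balanced bipartite graph is a comatching ordering:
`a_i b_i` is not an edge for any `i`. -/
def ComatchingOrd {n : ℕ} (H : SimpleGraph (Fin n ⊕ Fin n)) : Prop :=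
  ∀ i : Fin n, ¬ H.Adj (Sum.inl i) (Sum.inr i)

/-- The balanced bipartite product `H₁ ⋈ H₂` of two labelled balanced bipartite graphs:
the vertex set is `(A₁ × A₂) ⊕ (B₁ × B₂)`, with `(a¹_i, a²_j)` adjacent to `(b¹_k, b²_l)`
iff `i = k` and `a²_j b²_l ∈ E₂`, or `j = l` and `a¹_i b¹_k ∈ E₁`. -/
def bbProd {n₁ n₂ : ℕ} (H₁ : SimpleGraph (Fin n₁ ⊕ Fin n₁))
    (H₂ : SimpleGraph (Fin n₂ ⊕ Fin n₂)) :
    SimpleGraph ((Fin n₁ × Fin n₂) ⊕ (Fin n₁ × Fin n₂)) where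
  Adj x y :=
    match x, y with
    | Sum.inl (i, j), Sum.inr (k, l) =>
        (i = k ∧ H₂.Adj (Sum.inl j) (Sum.inr l)) ∨ (j = l ∧ H₁.Adj (Sum.inl i) (Sum.inr k))
    | Sum.inr (k, l), Sum.inl (i, j) =>
        (i = k ∧ H₂.Adj (Sum.inl j) (Sum.inr l)) ∨ (j = l ∧ H₁.Adj (Sum.inl i) (Sum.inr k))
    | _, _ => False
  symm := by
    constructor
    rintro (⟨i, j⟩ | ⟨i, j⟩) (⟨k, l⟩ | ⟨k, l⟩) h <;> exact h
  loopless := by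
    constructor
    rintro (⟨i, j⟩ | ⟨i, j⟩) h <;> exact h

lemma slice_card_left {α β : Type*} (i : α) (S : Set β) : (({i} : Set α) ×ˢ S).ncard = S.ncard := by
  rw [Set.singleton_prod, Set.ncard_image_of_injective]
  exact fun a b h => by simpa using h

lemma slice_card_right {α β : Type*} (S : Set α) (j : β) : (S ×ˢ ({j} : Set β)).ncard = S.ncard := by
  rw [Set.prod_singleton, Set.ncard_image_of_injective]
  exact fun a b h => by simpa using h

lemma union_card_mem {n₁ n₂ d₁ d₂ : ℕ} {S₁ : Set (Fin n₁)} {S₂ : Set (Fin n₂)} {i : Fin n₁} {j : Fin n₂}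
    (h₁ : S₁.ncard = d₁) (h₂ : S₂.ncard = d₂) (hi : i ∈ S₁) (hj : j ∈ S₂) :
    ((({i} : Set (Fin n₁)) ×ˢ S₂) ∪ (S₁ ×ˢ ({j} : Set (Fin n₂)))).ncard = d₁ + d₂ - 1 := by
  have key := Set.ncard_union_add_ncard_inter (({i} : Set (Fin n₁)) ×ˢ S₂) (S₁ ×ˢ ({j} : Set (Fin n₂)))
  have hint : ((({i} : Set (Fin n₁)) ×ˢ S₂) ∩ (S₁ ×ˢ ({j} : Set (Fin n₂)))) = {(i, j)} := by
    ext ⟨a, b⟩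
    simp only [Set.mem_inter_iff, Set.mem_prod, Set.mem_singleton_iff, Prod.ext_iff]
    constructor
    · rintro ⟨⟨rfl, hb⟩, ha, rfl⟩; exact ⟨rfl, rfl⟩
    · rintro ⟨rfl, rfl⟩; exact ⟨⟨rfl, hj⟩, hi, rfl⟩
  rw [hint, Set.ncard_singleton, slice_card_left, slice_card_right, h₁, h₂] at key
  omega

lemma union_card_nmem {n₁ n₂ d₁ d₂ : ℕ} {S₁ : Set (Fin n₁)} {S₂ : Set (Fin n₂)} {i : Fin n₁} {j : Fin n₂}
    (h₁ : S₁.ncard = d₁) (h₂ : S₂.ncard = d₂) (h : i ∉ S₁ ∨ j ∉ S₂) :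
    ((({i} : Set (Fin n₁)) ×ˢ S₂) ∪ (S₁ ×ˢ ({j} : Set (Fin n₂)))).ncard = d₁ + d₂ := by
  rw [Set.ncard_union_eq ?_ (Set.toFinite _) (Set.toFinite _), slice_card_left, slice_card_right, h₁, h₂, add_comm]
  rw [Set.disjoint_left]
  rintro ⟨a, b⟩ ⟨rfl, hb⟩ ⟨ha, rfl⟩
  tauto

lemma bbProd_nset_inl {n₁ n₂ : ℕ} (H₁ : SimpleGraph (Fin n₁ ⊕ Fin n₁))
    (H₂ : SimpleGraph (Fin n₂ ⊕ Fin n₂)) (i : Fin n₁) (j : Fin n₂) :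
    (bbProd H₁ H₂).neighborSet (Sum.inl (i, j)) =
      Sum.inr '' ((({i} : Set (Fin n₁)) ×ˢ {l | H₂.Adj (Sum.inl j) (Sum.inr l)}) ∪
        ({k | H₁.Adj (Sum.inl i) (Sum.inr k)} ×ˢ ({j} : Set (Fin n₂)))) := by
  ext (⟨k, l⟩ | ⟨k, l⟩) <;>
    simp [bbProd, SimpleGraph.neighborSet, Prod.ext_iff, eq_comm] <;> aesop

lemma bbProd_nset_inr {n₁ n₂ : ℕ} (H₁ : SimpleGraph (Fin n₁ ⊕ Fin n₁))
    (H₂ : SimpleGraph (Fin n₂ ⊕ Fin n₂)) (k : Fin n₁) (l : Fin n₂) :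
    (bbProd H₁ H₂).neighborSet (Sum.inr (k, l)) =
      Sum.inl '' ((({k} : Set (Fin n₁)) ×ˢ {j | H₂.Adj (Sum.inl j) (Sum.inr l)}) ∪
        ({i | H₁.Adj (Sum.inl i) (Sum.inr k)} ×ˢ ({l} : Set (Fin n₂)))) := by
  ext (⟨i, j⟩ | ⟨i, j⟩) <;>
    simp [bbProd, SimpleGraph.neighborSet, Prod.ext_iff, eq_comm] <;> aesop

lemma nset_card_inl {n : ℕ} {d : ℕ} (H : SimpleGraph (Fin n ⊕ Fin n)) (hb : IsBipSum H)
    (hr : ∀ v, (H.neighborSet v).ncard = d) (i : Fin n) :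
    {k | H.Adj (Sum.inl i) (Sum.inr k)}.ncard = d := by
  have h : H.neighborSet (Sum.inl i) = Sum.inr '' {k | H.Adj (Sum.inl i) (Sum.inr k)} := by
    ext (k | k) <;> simp [SimpleGraph.neighborSet]
    exact hb.1 i k
  rw [← hr (Sum.inl i), h, Set.ncard_image_of_injective _ Sum.inr_injective]

lemma nset_card_inr {n : ℕ} {d : ℕ} (H : SimpleGraph (Fin n ⊕ Fin n)) (hb : IsBipSum H)
    (hr : ∀ v, (H.neighborSet v).ncard = d) (l : Fin n) :
    {j | H.Adj (Sum.inl j) (Sum.inr l)}.ncard = d := by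
  have h : H.neighborSet (Sum.inr l) = Sum.inl '' {j | H.Adj (Sum.inl j) (Sum.inr l)} := by
    ext (j | j) <;> simp [SimpleGraph.neighborSet, SimpleGraph.adj_comm]
    exact fun h' => hb.2 _ _ h'
  rw [← hr (Sum.inr l), h, Set.ncard_image_of_injective _ Sum.inl_injective]


/-- Proposition 7: the balanced bipartite product of regular balanced bipartite graphs,
in matching or comatching orderings, is a regular balanced bipartite graph with parts
of size `n₁ * n₂`, of degree `d₁ + d₂ - 1` if both orderings are matching orderings,
and of degree `d₁ + d₂` otherwise. -/
theorem bbProd_regular {n₁ n₂ d₁ d₂ : ℕ} (hd₁ : 0 < d₁) (hd₂ : 0 < d₂)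
    (H₁ : SimpleGraph (Fin n₁ ⊕ Fin n₁)) (H₂ : SimpleGraph (Fin n₂ ⊕ Fin n₂))
    (hb₁ : IsBipSum H₁) (hb₂ : IsBipSum H₂)
    (ho₁ : MatchingOrd H₁ ∨ ComatchingOrd H₁)
    (ho₂ : MatchingOrd H₂ ∨ ComatchingOrd H₂)
    (hr₁ : ∀ v, (H₁.neighborSet v).ncard = d₁)
    (hr₂ : ∀ v, (H₂.neighborSet v).ncard = d₂) :
    IsBipSum (bbProd H₁ H₂) ∧
    Fintype.card (Fin n₁ × Fin n₂) = n₁ * n₂ ∧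
    ((MatchingOrd H₁ ∧ MatchingOrd H₂) →
      ∀ v, ((bbProd H₁ H₂).neighborSet v).ncard = d₁ + d₂ - 1) ∧
    (¬ (MatchingOrd H₁ ∧ MatchingOrd H₂) →
      ∀ v, ((bbProd H₁ H₂).neighborSet v).ncard = d₁ + d₂) := by
  refine ⟨⟨?_, ?_⟩, by simp, ?_, ?_⟩
  · rintro ⟨i, j⟩ ⟨k, l⟩ h; exact h
  · rintro ⟨i, j⟩ ⟨k, l⟩ h; exact h
  · rintro ⟨hm₁, hm₂⟩ (⟨i, j⟩ | ⟨k, l⟩)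
    · rw [bbProd_nset_inl, Set.ncard_image_of_injective _ Sum.inr_injective]
      exact union_card_mem (nset_card_inl H₁ hb₁ hr₁ i) (nset_card_inl H₂ hb₂ hr₂ j)
        (hm₁ i) (hm₂ j)
    · rw [bbProd_nset_inr, Set.ncard_image_of_injective _ Sum.inl_injective]
      exact union_card_mem (nset_card_inr H₁ hb₁ hr₁ k) (nset_card_inr H₂ hb₂ hr₂ l)
        (hm₁ k) (hm₂ l)
  · intro hnm
    have key : ∀ (a : Fin n₁) (b : Fin n₂),
        ¬ H₁.Adj (Sum.inl a) (Sum.inr a) ∨ ¬ H₂.Adj (Sum.inl b) (Sum.inr b) := by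
      intro a b
      rcases ho₁ with hm₁ | hc₁
      · rcases ho₂ with hm₂ | hc₂
        · exact absurd ⟨hm₁, hm₂⟩ hnm
        · exact Or.inr (hc₂ b)
      · exact Or.inl (hc₁ a)
    rintro (⟨i, j⟩ | ⟨k, l⟩)
    · rw [bbProd_nset_inl, Set.ncard_image_of_injective _ Sum.inr_injective]
      exact union_card_nmem (nset_card_inl H₁ hb₁ hr₁ i) (nset_card_inl H₂ hb₂ hr₂ j) (key i j)
    · rw [bbProd_nset_inr, Set.ncard_image_of_injective _ Sum.inl_injective]
      exact union_card_nmem (nset_card_inr H₁ hb₁ hr₁ k) (nset_card_inr H₂ hb₂ hr₂ l) (key k l)
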